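/- Let A : ℝ³ → ℝ³ be an invertible affine map with linear part L. Then there exists a positive real number α* (namely α* = (det L)²) such that: (i) for every affinely independent quadruple of points y₀, y₁, y₂, y₃ in ℝ³, one has cm(A y₀, A y₁, A y₂, A y₃) = α* · cm(y₀, y₁, y₂, y₃); (ii) for every quintuple of points y₀,…,y₄ in ℝ³ with y₁ ≠ y₃ and y₂ ≠ y₄, the five-equation system ⁴q'_j = α·⁴q_j (j = 0,…,4), built from the quintuple and its image quintuple A y₀,…,A y₄, has a solution with α = α* and t, s, t', s' > 0; (iii) for every quintuple of points y₀,…,y₄ in ℝ³ with y₁ ≠ y₃, y₂ ≠ y₄ and y₁ ≠ y₄, the seven-equation system consisting of ⁵q'_j = α·⁵q_j (j = 0,…,4) together with ⁵q(t,s,r) = 0 and ⁵q'(t',s',r') = 0, built from the quintuple and its image quintuple, has a solution with α = α* and t, s, r, t', s', r' > 0. -/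

import Mathlib

/-- The Cayley–Menger-type determinant built from the six prescribed squared
distances `d01, d02, d03, d12, d13, d23` of a quadruple of points: the determinant
of the `5 × 5` matrix with `0` in the corner, `1`'s in the rest of the first row
and column, and the `d_{ij}`'s placed symmetrically. -/
noncomputable def cmQ (d01 d02 d03 d12 d13 d23 : ℝ) : ℝ :=
  Matrix.det !![0, 1, 1, 1, 1;
                1, 0, d01, d02, d03;
                1, d01, 0, d12, d13;
                1, d02, d12, 0, d23;
                1, d03, d13, d23, 0]

/-- The Cayley–Menger determinant `cm(y₀,y₁,y₂,y₃)` of four points of `ℝ³`. -/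
noncomputable def cm4 (y : Fin 4 → EuclideanSpace ℝ (Fin 3)) : ℝ :=
  cmQ (dist (y 0) (y 1) ^ 2) (dist (y 0) (y 2) ^ 2) (dist (y 0) (y 3) ^ 2)
      (dist (y 1) (y 2) ^ 2) (dist (y 1) (y 3) ^ 2) (dist (y 2) (y 3) ^ 2)

/-- `⁴q₀(t,s)`: the Cayley–Menger determinant of the quadruple `(x₁,x₂,x₃,x₄)`
in which `dist(x₁,x₃)²` is replaced by `t²` and `dist(x₂,x₄)²` by `s²`. -/
noncomputable def q40 (x : Fin 5 → EuclideanSpace ℝ (Fin 3)) (t s : ℝ) : ℝ :=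
  cmQ (dist (x 1) (x 2) ^ 2) (t ^ 2) (dist (x 1) (x 4) ^ 2)
      (dist (x 2) (x 3) ^ 2) (s ^ 2) (dist (x 3) (x 4) ^ 2)

/-- `⁴q₁(s)`: the Cayley–Menger determinant of the quadruple `(x₀,x₂,x₃,x₄)`
in which `dist(x₂,x₄)²` is replaced by `s²`. -/
noncomputable def q41 (x : Fin 5 → EuclideanSpace ℝ (Fin 3)) (s : ℝ) : ℝ :=
  cmQ (dist (x 0) (x 2) ^ 2) (dist (x 0) (x 3) ^ 2) (dist (x 0) (x 4) ^ 2)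
      (dist (x 2) (x 3) ^ 2) (s ^ 2) (dist (x 3) (x 4) ^ 2)

/-- `⁴q₂(t)`: the Cayley–Menger determinant of the quadruple `(x₀,x₁,x₃,x₄)`
in which `dist(x₁,x₃)²` is replaced by `t²`. -/
noncomputable def q42 (x : Fin 5 → EuclideanSpace ℝ (Fin 3)) (t : ℝ) : ℝ :=
  cmQ (dist (x 0) (x 1) ^ 2) (dist (x 0) (x 3) ^ 2) (dist (x 0) (x 4) ^ 2)
      (t ^ 2) (dist (x 1) (x 4) ^ 2) (dist (x 3) (x 4) ^ 2)

/-- `⁴q₃(s)`: the Cayley–Menger determinant of the quadruple `(x₀,x₁,x₂,x₄)`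
in which `dist(x₂,x₄)²` is replaced by `s²`. -/
noncomputable def q43 (x : Fin 5 → EuclideanSpace ℝ (Fin 3)) (s : ℝ) : ℝ :=
  cmQ (dist (x 0) (x 1) ^ 2) (dist (x 0) (x 2) ^ 2) (dist (x 0) (x 4) ^ 2)
      (dist (x 1) (x 2) ^ 2) (dist (x 1) (x 4) ^ 2) (s ^ 2)

/-- `⁴q₄(t)`: the Cayley–Menger determinant of the quadruple `(x₀,x₁,x₂,x₃)`
in which `dist(x₁,x₃)²` is replaced by `t²`. -/
noncomputable def q44 (x : Fin 5 → EuclideanSpace ℝ (Fin 3)) (t : ℝ) : ℝ :=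
  cmQ (dist (x 0) (x 1) ^ 2) (dist (x 0) (x 2) ^ 2) (dist (x 0) (x 3) ^ 2)
      (dist (x 1) (x 2) ^ 2) (t ^ 2) (dist (x 2) (x 3) ^ 2)

/-- The Cayley–Menger-type determinant built from the ten prescribed squared
distances of a quintuple of points: the determinant of the `6 × 6` matrix with
`0` in the corner, `1`'s in the rest of the first row and column, and the
`d_{ij}`'s placed symmetrically. -/
noncomputable def cmP (d01 d02 d03 d04 d12 d13 d14 d23 d24 d34 : ℝ) : ℝ :=
  Matrix.det !![0, 1, 1, 1, 1, 1;
                1, 0, d01, d02, d03, d04;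
                1, d01, 0, d12, d13, d14;
                1, d02, d12, 0, d23, d24;
                1, d03, d13, d23, 0, d34;
                1, d04, d14, d24, d34, 0]

/-- `⁵q₀(t,s,r)`: the Cayley–Menger determinant of the quadruple `(x₁,x₂,x₃,x₄)`
in which `dist(x₁,x₃)²` is replaced by `t²`, `dist(x₂,x₄)²` by `s²`, and
`dist(x₁,x₄)²` by `r²`. -/
noncomputable def q50 (x : Fin 5 → EuclideanSpace ℝ (Fin 3)) (t s r : ℝ) : ℝ :=
  cmQ (dist (x 1) (x 2) ^ 2) (t ^ 2) (r ^ 2)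
      (dist (x 2) (x 3) ^ 2) (s ^ 2) (dist (x 3) (x 4) ^ 2)

/-- `⁵q₁(s)`: the Cayley–Menger determinant of the quadruple `(x₀,x₂,x₃,x₄)`
in which `dist(x₂,x₄)²` is replaced by `s²`. -/
noncomputable def q51 (x : Fin 5 → EuclideanSpace ℝ (Fin 3)) (s : ℝ) : ℝ :=
  cmQ (dist (x 0) (x 2) ^ 2) (dist (x 0) (x 3) ^ 2) (dist (x 0) (x 4) ^ 2)
      (dist (x 2) (x 3) ^ 2) (s ^ 2) (dist (x 3) (x 4) ^ 2)

/-- `⁵q₂(t,r)`: the Cayley–Menger determinant of the quadruple `(x₀,x₁,x₃,x₄)`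
in which `dist(x₁,x₃)²` is replaced by `t²` and `dist(x₁,x₄)²` by `r²`. -/
noncomputable def q52 (x : Fin 5 → EuclideanSpace ℝ (Fin 3)) (t r : ℝ) : ℝ :=
  cmQ (dist (x 0) (x 1) ^ 2) (dist (x 0) (x 3) ^ 2) (dist (x 0) (x 4) ^ 2)
      (t ^ 2) (r ^ 2) (dist (x 3) (x 4) ^ 2)

/-- `⁵q₃(s,r)`: the Cayley–Menger determinant of the quadruple `(x₀,x₁,x₂,x₄)`
in which `dist(x₂,x₄)²` is replaced by `s²` and `dist(x₁,x₄)²` by `r²`. -/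
noncomputable def q53 (x : Fin 5 → EuclideanSpace ℝ (Fin 3)) (s r : ℝ) : ℝ :=
  cmQ (dist (x 0) (x 1) ^ 2) (dist (x 0) (x 2) ^ 2) (dist (x 0) (x 4) ^ 2)
      (dist (x 1) (x 2) ^ 2) (r ^ 2) (s ^ 2)

/-- `⁵q₄(t)`: the Cayley–Menger determinant of the quadruple `(x₀,x₁,x₂,x₃)`
in which `dist(x₁,x₃)²` is replaced by `t²`. -/
noncomputable def q54 (x : Fin 5 → EuclideanSpace ℝ (Fin 3)) (t : ℝ) : ℝ :=
  cmQ (dist (x 0) (x 1) ^ 2) (dist (x 0) (x 2) ^ 2) (dist (x 0) (x 3) ^ 2)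
      (dist (x 1) (x 2) ^ 2) (t ^ 2) (dist (x 2) (x 3) ^ 2)

/-- `⁵q(t,s,r)`: the `6 × 6` Cayley–Menger determinant of all five points
`(x₀,x₁,x₂,x₃,x₄)` in which `dist(x₁,x₃)²` is replaced by `t²`, `dist(x₂,x₄)²`
by `s²`, and `dist(x₁,x₄)²` by `r²`. -/
noncomputable def q5full (x : Fin 5 → EuclideanSpace ℝ (Fin 3)) (t s r : ℝ) : ℝ :=
  cmP (dist (x 0) (x 1) ^ 2) (dist (x 0) (x 2) ^ 2) (dist (x 0) (x 3) ^ 2)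
      (dist (x 0) (x 4) ^ 2) (dist (x 1) (x 2) ^ 2) (t ^ 2) (r ^ 2)
      (dist (x 2) (x 3) ^ 2) (s ^ 2) (dist (x 3) (x 4) ^ 2)


set_option maxHeartbeats 4000000 in
private lemma det_aux_four (A : Matrix (Fin 4) (Fin 4) ℝ) :
    A.det = 0
      + A 0 0*A 1 1*A 2 2*A 3 3
      - A 0 0*A 1 1*A 2 3*A 3 2
      - A 0 0*A 1 2*A 2 1*A 3 3
      + A 0 0*A 1 2*A 2 3*A 3 1
      + A 0 0*A 1 3*A 2 1*A 3 2
      - A 0 0*A 1 3*A 2 2*A 3 1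
      - A 0 1*A 1 0*A 2 2*A 3 3
      + A 0 1*A 1 0*A 2 3*A 3 2
      + A 0 1*A 1 2*A 2 0*A 3 3
      - A 0 1*A 1 2*A 2 3*A 3 0
      - A 0 1*A 1 3*A 2 0*A 3 2
      + A 0 1*A 1 3*A 2 2*A 3 0
      + A 0 2*A 1 0*A 2 1*A 3 3
      - A 0 2*A 1 0*A 2 3*A 3 1
      - A 0 2*A 1 1*A 2 0*A 3 3
      + A 0 2*A 1 1*A 2 3*A 3 0
      + A 0 2*A 1 3*A 2 0*A 3 1
      - A 0 2*A 1 3*A 2 1*A 3 0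
      - A 0 3*A 1 0*A 2 1*A 3 2
      + A 0 3*A 1 0*A 2 2*A 3 1
      + A 0 3*A 1 1*A 2 0*A 3 2
      - A 0 3*A 1 1*A 2 2*A 3 0
      - A 0 3*A 1 2*A 2 0*A 3 1
      + A 0 3*A 1 2*A 2 1*A 3 0 := by
  rw [Matrix.det_succ_row_zero, Fin.sum_univ_four]
  simp only [Matrix.det_fin_three, Matrix.submatrix_apply,
    show (((0:Fin 4)).succAbove (0:Fin 3)) = (1:Fin 4) from rfl,
    show (((0:Fin 4)).succAbove (1:Fin 3)) = (2:Fin 4) from rfl,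
    show (((0:Fin 4)).succAbove (2:Fin 3)) = (3:Fin 4) from rfl,
    show (((1:Fin 4)).succAbove (0:Fin 3)) = (0:Fin 4) from rfl,
    show (((1:Fin 4)).succAbove (1:Fin 3)) = (2:Fin 4) from rfl,
    show (((1:Fin 4)).succAbove (2:Fin 3)) = (3:Fin 4) from rfl,
    show (((2:Fin 4)).succAbove (0:Fin 3)) = (0:Fin 4) from rfl,
    show (((2:Fin 4)).succAbove (1:Fin 3)) = (1:Fin 4) from rfl,
    show (((2:Fin 4)).succAbove (2:Fin 3)) = (3:Fin 4) from rfl,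
    show (((3:Fin 4)).succAbove (0:Fin 3)) = (0:Fin 4) from rfl,
    show (((3:Fin 4)).succAbove (1:Fin 3)) = (1:Fin 4) from rfl,
    show (((3:Fin 4)).succAbove (2:Fin 3)) = (2:Fin 4) from rfl,
    show Fin.succ (0:Fin 3) = (1:Fin 4) from rfl,
    show Fin.succ (1:Fin 3) = (2:Fin 4) from rfl,
    show Fin.succ (2:Fin 3) = (3:Fin 4) from rfl,
    show (((0:Fin 4)):ℕ) = 0 from rfl,
    show (((1:Fin 4)):ℕ) = 1 from rfl,
    show (((2:Fin 4)):ℕ) = 2 from rfl,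
    show (((3:Fin 4)):ℕ) = 3 from rfl]
  norm_num
  ring

set_option maxHeartbeats 4000000 in
private lemma det_aux_five (A : Matrix (Fin 5) (Fin 5) ℝ) :
    A.det = 0
      + A 0 0*A 1 1*A 2 2*A 3 3*A 4 4
      - A 0 0*A 1 1*A 2 2*A 3 4*A 4 3
      - A 0 0*A 1 1*A 2 3*A 3 2*A 4 4
      + A 0 0*A 1 1*A 2 3*A 3 4*A 4 2
      + A 0 0*A 1 1*A 2 4*A 3 2*A 4 3
      - A 0 0*A 1 1*A 2 4*A 3 3*A 4 2
      - A 0 0*A 1 2*A 2 1*A 3 3*A 4 4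
      + A 0 0*A 1 2*A 2 1*A 3 4*A 4 3
      + A 0 0*A 1 2*A 2 3*A 3 1*A 4 4
      - A 0 0*A 1 2*A 2 3*A 3 4*A 4 1
      - A 0 0*A 1 2*A 2 4*A 3 1*A 4 3
      + A 0 0*A 1 2*A 2 4*A 3 3*A 4 1
      + A 0 0*A 1 3*A 2 1*A 3 2*A 4 4
      - A 0 0*A 1 3*A 2 1*A 3 4*A 4 2
      - A 0 0*A 1 3*A 2 2*A 3 1*A 4 4
      + A 0 0*A 1 3*A 2 2*A 3 4*A 4 1
      + A 0 0*A 1 3*A 2 4*A 3 1*A 4 2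
      - A 0 0*A 1 3*A 2 4*A 3 2*A 4 1
      - A 0 0*A 1 4*A 2 1*A 3 2*A 4 3
      + A 0 0*A 1 4*A 2 1*A 3 3*A 4 2
      + A 0 0*A 1 4*A 2 2*A 3 1*A 4 3
      - A 0 0*A 1 4*A 2 2*A 3 3*A 4 1
      - A 0 0*A 1 4*A 2 3*A 3 1*A 4 2
      + A 0 0*A 1 4*A 2 3*A 3 2*A 4 1
      - A 0 1*A 1 0*A 2 2*A 3 3*A 4 4
      + A 0 1*A 1 0*A 2 2*A 3 4*A 4 3
      + A 0 1*A 1 0*A 2 3*A 3 2*A 4 4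
      - A 0 1*A 1 0*A 2 3*A 3 4*A 4 2
      - A 0 1*A 1 0*A 2 4*A 3 2*A 4 3
      + A 0 1*A 1 0*A 2 4*A 3 3*A 4 2
      + A 0 1*A 1 2*A 2 0*A 3 3*A 4 4
      - A 0 1*A 1 2*A 2 0*A 3 4*A 4 3
      - A 0 1*A 1 2*A 2 3*A 3 0*A 4 4
      + A 0 1*A 1 2*A 2 3*A 3 4*A 4 0
      + A 0 1*A 1 2*A 2 4*A 3 0*A 4 3
      - A 0 1*A 1 2*A 2 4*A 3 3*A 4 0
      - A 0 1*A 1 3*A 2 0*A 3 2*A 4 4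
      + A 0 1*A 1 3*A 2 0*A 3 4*A 4 2
      + A 0 1*A 1 3*A 2 2*A 3 0*A 4 4
      - A 0 1*A 1 3*A 2 2*A 3 4*A 4 0
      - A 0 1*A 1 3*A 2 4*A 3 0*A 4 2
      + A 0 1*A 1 3*A 2 4*A 3 2*A 4 0
      + A 0 1*A 1 4*A 2 0*A 3 2*A 4 3
      - A 0 1*A 1 4*A 2 0*A 3 3*A 4 2
      - A 0 1*A 1 4*A 2 2*A 3 0*A 4 3
      + A 0 1*A 1 4*A 2 2*A 3 3*A 4 0
      + A 0 1*A 1 4*A 2 3*A 3 0*A 4 2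
      - A 0 1*A 1 4*A 2 3*A 3 2*A 4 0
      + A 0 2*A 1 0*A 2 1*A 3 3*A 4 4
      - A 0 2*A 1 0*A 2 1*A 3 4*A 4 3
      - A 0 2*A 1 0*A 2 3*A 3 1*A 4 4
      + A 0 2*A 1 0*A 2 3*A 3 4*A 4 1
      + A 0 2*A 1 0*A 2 4*A 3 1*A 4 3
      - A 0 2*A 1 0*A 2 4*A 3 3*A 4 1
      - A 0 2*A 1 1*A 2 0*A 3 3*A 4 4
      + A 0 2*A 1 1*A 2 0*A 3 4*A 4 3
      + A 0 2*A 1 1*A 2 3*A 3 0*A 4 4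
      - A 0 2*A 1 1*A 2 3*A 3 4*A 4 0
      - A 0 2*A 1 1*A 2 4*A 3 0*A 4 3
      + A 0 2*A 1 1*A 2 4*A 3 3*A 4 0
      + A 0 2*A 1 3*A 2 0*A 3 1*A 4 4
      - A 0 2*A 1 3*A 2 0*A 3 4*A 4 1
      - A 0 2*A 1 3*A 2 1*A 3 0*A 4 4
      + A 0 2*A 1 3*A 2 1*A 3 4*A 4 0
      + A 0 2*A 1 3*A 2 4*A 3 0*A 4 1
      - A 0 2*A 1 3*A 2 4*A 3 1*A 4 0
      - A 0 2*A 1 4*A 2 0*A 3 1*A 4 3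
      + A 0 2*A 1 4*A 2 0*A 3 3*A 4 1
      + A 0 2*A 1 4*A 2 1*A 3 0*A 4 3
      - A 0 2*A 1 4*A 2 1*A 3 3*A 4 0
      - A 0 2*A 1 4*A 2 3*A 3 0*A 4 1
      + A 0 2*A 1 4*A 2 3*A 3 1*A 4 0
      - A 0 3*A 1 0*A 2 1*A 3 2*A 4 4
      + A 0 3*A 1 0*A 2 1*A 3 4*A 4 2
      + A 0 3*A 1 0*A 2 2*A 3 1*A 4 4
      - A 0 3*A 1 0*A 2 2*A 3 4*A 4 1
      - A 0 3*A 1 0*A 2 4*A 3 1*A 4 2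
      + A 0 3*A 1 0*A 2 4*A 3 2*A 4 1
      + A 0 3*A 1 1*A 2 0*A 3 2*A 4 4
      - A 0 3*A 1 1*A 2 0*A 3 4*A 4 2
      - A 0 3*A 1 1*A 2 2*A 3 0*A 4 4
      + A 0 3*A 1 1*A 2 2*A 3 4*A 4 0
      + A 0 3*A 1 1*A 2 4*A 3 0*A 4 2
      - A 0 3*A 1 1*A 2 4*A 3 2*A 4 0
      - A 0 3*A 1 2*A 2 0*A 3 1*A 4 4
      + A 0 3*A 1 2*A 2 0*A 3 4*A 4 1
      + A 0 3*A 1 2*A 2 1*A 3 0*A 4 4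
      - A 0 3*A 1 2*A 2 1*A 3 4*A 4 0
      - A 0 3*A 1 2*A 2 4*A 3 0*A 4 1
      + A 0 3*A 1 2*A 2 4*A 3 1*A 4 0
      + A 0 3*A 1 4*A 2 0*A 3 1*A 4 2
      - A 0 3*A 1 4*A 2 0*A 3 2*A 4 1
      - A 0 3*A 1 4*A 2 1*A 3 0*A 4 2
      + A 0 3*A 1 4*A 2 1*A 3 2*A 4 0
      + A 0 3*A 1 4*A 2 2*A 3 0*A 4 1
      - A 0 3*A 1 4*A 2 2*A 3 1*A 4 0
      + A 0 4*A 1 0*A 2 1*A 3 2*A 4 3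
      - A 0 4*A 1 0*A 2 1*A 3 3*A 4 2
      - A 0 4*A 1 0*A 2 2*A 3 1*A 4 3
      + A 0 4*A 1 0*A 2 2*A 3 3*A 4 1
      + A 0 4*A 1 0*A 2 3*A 3 1*A 4 2
      - A 0 4*A 1 0*A 2 3*A 3 2*A 4 1
      - A 0 4*A 1 1*A 2 0*A 3 2*A 4 3
      + A 0 4*A 1 1*A 2 0*A 3 3*A 4 2
      + A 0 4*A 1 1*A 2 2*A 3 0*A 4 3
      - A 0 4*A 1 1*A 2 2*A 3 3*A 4 0
      - A 0 4*A 1 1*A 2 3*A 3 0*A 4 2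
      + A 0 4*A 1 1*A 2 3*A 3 2*A 4 0
      + A 0 4*A 1 2*A 2 0*A 3 1*A 4 3
      - A 0 4*A 1 2*A 2 0*A 3 3*A 4 1
      - A 0 4*A 1 2*A 2 1*A 3 0*A 4 3
      + A 0 4*A 1 2*A 2 1*A 3 3*A 4 0
      + A 0 4*A 1 2*A 2 3*A 3 0*A 4 1
      - A 0 4*A 1 2*A 2 3*A 3 1*A 4 0
      - A 0 4*A 1 3*A 2 0*A 3 1*A 4 2
      + A 0 4*A 1 3*A 2 0*A 3 2*A 4 1
      + A 0 4*A 1 3*A 2 1*A 3 0*A 4 2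
      - A 0 4*A 1 3*A 2 1*A 3 2*A 4 0
      - A 0 4*A 1 3*A 2 2*A 3 0*A 4 1
      + A 0 4*A 1 3*A 2 2*A 3 1*A 4 0 := by
  rw [Matrix.det_succ_row_zero, Fin.sum_univ_five]
  simp only [det_aux_four, Matrix.submatrix_apply,
    show (((0:Fin 5)).succAbove (0:Fin 4)) = (1:Fin 5) from rfl,
    show (((0:Fin 5)).succAbove (1:Fin 4)) = (2:Fin 5) from rfl,
    show (((0:Fin 5)).succAbove (2:Fin 4)) = (3:Fin 5) from rfl,
    show (((0:Fin 5)).succAbove (3:Fin 4)) = (4:Fin 5) from rfl,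
    show (((1:Fin 5)).succAbove (0:Fin 4)) = (0:Fin 5) from rfl,
    show (((1:Fin 5)).succAbove (1:Fin 4)) = (2:Fin 5) from rfl,
    show (((1:Fin 5)).succAbove (2:Fin 4)) = (3:Fin 5) from rfl,
    show (((1:Fin 5)).succAbove (3:Fin 4)) = (4:Fin 5) from rfl,
    show (((2:Fin 5)).succAbove (0:Fin 4)) = (0:Fin 5) from rfl,
    show (((2:Fin 5)).succAbove (1:Fin 4)) = (1:Fin 5) from rfl,
    show (((2:Fin 5)).succAbove (2:Fin 4)) = (3:Fin 5) from rfl,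
    show (((2:Fin 5)).succAbove (3:Fin 4)) = (4:Fin 5) from rfl,
    show (((3:Fin 5)).succAbove (0:Fin 4)) = (0:Fin 5) from rfl,
    show (((3:Fin 5)).succAbove (1:Fin 4)) = (1:Fin 5) from rfl,
    show (((3:Fin 5)).succAbove (2:Fin 4)) = (2:Fin 5) from rfl,
    show (((3:Fin 5)).succAbove (3:Fin 4)) = (4:Fin 5) from rfl,
    show (((4:Fin 5)).succAbove (0:Fin 4)) = (0:Fin 5) from rfl,
    show (((4:Fin 5)).succAbove (1:Fin 4)) = (1:Fin 5) from rfl,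
    show (((4:Fin 5)).succAbove (2:Fin 4)) = (2:Fin 5) from rfl,
    show (((4:Fin 5)).succAbove (3:Fin 4)) = (3:Fin 5) from rfl,
    show Fin.succ (0:Fin 4) = (1:Fin 5) from rfl,
    show Fin.succ (1:Fin 4) = (2:Fin 5) from rfl,
    show Fin.succ (2:Fin 4) = (3:Fin 5) from rfl,
    show Fin.succ (3:Fin 4) = (4:Fin 5) from rfl,
    show (((0:Fin 5)):ℕ) = 0 from rfl,
    show (((1:Fin 5)):ℕ) = 1 from rfl,
    show (((2:Fin 5)):ℕ) = 2 from rfl,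
    show (((3:Fin 5)):ℕ) = 3 from rfl,
    show (((4:Fin 5)):ℕ) = 4 from rfl]
  norm_num
  ring


open scoped RealInnerProductSpace
open Matrix

private abbrev E3 := EuclideanSpace ℝ (Fin 3)

private lemma aux_apply_eq (L : E3 →ₗ[ℝ] E3) (x : E3) (k : Fin 3) :
    L x k = ∑ l, LinearMap.toMatrix (PiLp.basisFun 2 ℝ (Fin 3)) (PiLp.basisFun 2 ℝ (Fin 3)) L k l * x l := by
  have h := LinearMap.toMatrix_mulVec_repr (PiLp.basisFun 2 ℝ (Fin 3)) (PiLp.basisFun 2 ℝ (Fin 3)) L x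
  have h2 := congrFun h k
  simpa [Matrix.mulVec, dotProduct, PiLp.basisFun_repr, Fin.sum_univ_three] using h2.symm

private lemma aux_gram_entry (x y : E3) : ⟪x, y⟫ = ∑ k, x k * y k := by
  simp [PiLp.inner_apply, RCLike.inner_apply, conj_trivial]
  exact Finset.sum_congr rfl fun _ _ => mul_comm _ _

private lemma aux_gram_det_eq (v : Fin 3 → E3) :
    Matrix.det (Matrix.of fun i j => ⟪v i, v j⟫) =
      (Matrix.det (Matrix.of fun i k => v i k)) ^ 2 := by
  have : (Matrix.of fun i j => ⟪v i, v j⟫) =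
      (Matrix.of fun i k => v i k) * (Matrix.of fun i k => v i k)ᵀ := by
    ext i j
    simp [Matrix.mul_apply, aux_gram_entry, Matrix.transpose_apply]
  rw [this, Matrix.det_mul, Matrix.det_transpose, sq]

private lemma aux_gram_transform (L : E3 →ₗ[ℝ] E3) (v : Fin 3 → E3) :
    Matrix.det (Matrix.of fun i j => ⟪L (v i), L (v j)⟫) =
      (LinearMap.det L)^2 * Matrix.det (Matrix.of fun i j => ⟪v i, v j⟫) := by
  set b := PiLp.basisFun 2 ℝ (Fin 3)
  set Lm := LinearMap.toMatrix b b L with hLm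
  have hM : (Matrix.of fun i k => L (v i) k) = (Matrix.of fun i k => v i k) * Lmᵀ := by
    ext i k
    simp [Matrix.mul_apply, aux_apply_eq L (v i) k, Matrix.transpose_apply, mul_comm]
    rfl
  rw [aux_gram_det_eq, aux_gram_det_eq, hM, Matrix.det_mul, Matrix.det_transpose,
    ← LinearMap.det_toMatrix b L, ← hLm]
  ring

set_option maxHeartbeats 4000000 in
private lemma aux_key4 (g11 g12 g13 g22 g23 g33 : ℝ) :
    cmQ g11 g22 g33 (g11 - 2*g12 + g22) (g11 - 2*g13 + g33) (g22 - 2*g23 + g33)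
      = 8 * Matrix.det !![g11,g12,g13;g12,g22,g23;g13,g23,g33] := by
  rw [cmQ, det_aux_five, Matrix.det_fin_three]
  norm_num [Matrix.cons_val_zero, Matrix.cons_val_one, Matrix.head_cons,
    Matrix.cons_val_two, Matrix.cons_val_three, Matrix.cons_val_four,
    Matrix.vecHead, Matrix.vecTail]
  ring

private lemma aux_dist_sq (x y : E3) : dist x y ^ 2 = ⟪x - y, x - y⟫ := by
  rw [dist_eq_norm, ← real_inner_self_eq_norm_sq]

private lemma aux_cmQ_dist (q0 q1 q2 q3 : E3) :
    cmQ (dist q0 q1 ^ 2) (dist q0 q2 ^ 2) (dist q0 q3 ^ 2)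
        (dist q1 q2 ^ 2) (dist q1 q3 ^ 2) (dist q2 q3 ^ 2)
      = 8 * Matrix.det (Matrix.of fun i j => ⟪![q1-q0,q2-q0,q3-q0] i, ![q1-q0,q2-q0,q3-q0] j⟫) := by
  have e1 : dist q0 q1 ^ 2 = ⟪q1-q0, q1-q0⟫ := by rw [dist_comm, aux_dist_sq]
  have e2 : dist q0 q2 ^ 2 = ⟪q2-q0, q2-q0⟫ := by rw [dist_comm, aux_dist_sq]
  have e3 : dist q0 q3 ^ 2 = ⟪q3-q0, q3-q0⟫ := by rw [dist_comm, aux_dist_sq]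
  have e12 : dist q1 q2 ^ 2 = ⟪q1-q0,q1-q0⟫ - 2*⟪q1-q0,q2-q0⟫ + ⟪q2-q0,q2-q0⟫ := by
    rw [aux_dist_sq, show q1 - q2 = (q1-q0) - (q2-q0) by abel, real_inner_sub_sub_self]
  have e13 : dist q1 q3 ^ 2 = ⟪q1-q0,q1-q0⟫ - 2*⟪q1-q0,q3-q0⟫ + ⟪q3-q0,q3-q0⟫ := by
    rw [aux_dist_sq, show q1 - q3 = (q1-q0) - (q3-q0) by abel, real_inner_sub_sub_self]
  have e23 : dist q2 q3 ^ 2 = ⟪q2-q0,q2-q0⟫ - 2*⟪q2-q0,q3-q0⟫ + ⟪q3-q0,q3-q0⟫ := by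
    rw [aux_dist_sq, show q2 - q3 = (q2-q0) - (q3-q0) by abel, real_inner_sub_sub_self]
  rw [e1, e2, e3, e12, e13, e23, aux_key4]
  congr 1
  have : (Matrix.of fun i j => ⟪![q1-q0,q2-q0,q3-q0] i, ![q1-q0,q2-q0,q3-q0] j⟫) =
      !![⟪q1-q0,q1-q0⟫,⟪q1-q0,q2-q0⟫,⟪q1-q0,q3-q0⟫;
         ⟪q1-q0,q2-q0⟫,⟪q2-q0,q2-q0⟫,⟪q2-q0,q3-q0⟫;
         ⟪q1-q0,q3-q0⟫,⟪q2-q0,q3-q0⟫,⟪q3-q0,q3-q0⟫] := by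
    ext i j
    fin_cases i <;> fin_cases j <;>
      simp only [Matrix.of_apply, Matrix.cons_val', Matrix.cons_val_zero, Matrix.cons_val_one,
        Matrix.head_cons, Matrix.cons_val_two, Matrix.vecHead, Matrix.vecTail,
        Function.comp_apply, Matrix.empty_val', Matrix.cons_val_fin_one, Matrix.head_fin_const] <;>
      first | rfl | exact real_inner_comm _ _
  rw [this]

private lemma aux_cmQ_affine (A : E3 →ᵃ[ℝ] E3) (q0 q1 q2 q3 : E3) :
    cmQ (dist (A q0) (A q1) ^ 2) (dist (A q0) (A q2) ^ 2) (dist (A q0) (A q3) ^ 2)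
        (dist (A q1) (A q2) ^ 2) (dist (A q1) (A q3) ^ 2) (dist (A q2) (A q3) ^ 2)
      = (LinearMap.det A.linear)^2 *
        cmQ (dist q0 q1 ^ 2) (dist q0 q2 ^ 2) (dist q0 q3 ^ 2)
            (dist q1 q2 ^ 2) (dist q1 q3 ^ 2) (dist q2 q3 ^ 2) := by
  rw [aux_cmQ_dist, aux_cmQ_dist]
  have hv : ∀ x y : E3, A x - A y = A.linear (x - y) := by
    intro x y
    simpa [vsub_eq_sub] using (A.linearMap_vsub x y).symm
  have hfun : (![A q1 - A q0, A q2 - A q0, A q3 - A q0] : Fin 3 → E3) =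
      fun i => A.linear ((![q1-q0,q2-q0,q3-q0] : Fin 3 → E3) i) := by
    funext i
    fin_cases i <;> simp [hv]
  simp only [hfun]
  rw [aux_gram_transform]
  ring

private lemma aux_cons_val_five {α : Type*} (x : α) (u : Fin 5 → α) :
    Matrix.vecCons x u 5 = u 4 := rfl

private lemma aux_cmP_dist_zero (p : Fin 5 → E3) :
    cmP (dist (p 0) (p 1) ^ 2) (dist (p 0) (p 2) ^ 2) (dist (p 0) (p 3) ^ 2)
        (dist (p 0) (p 4) ^ 2) (dist (p 1) (p 2) ^ 2) (dist (p 1) (p 3) ^ 2)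
        (dist (p 1) (p 4) ^ 2) (dist (p 2) (p 3) ^ 2) (dist (p 2) (p 4) ^ 2)
        (dist (p 3) (p 4) ^ 2) = 0 := by
  -- five points in ℝ³ are affinely dependent
  have hnot : ¬ AffineIndependent ℝ p := by
    intro h
    have h1 := h.card_le_finrank_succ
    have h2 : Module.finrank ℝ (vectorSpan ℝ (Set.range p)) ≤ Module.finrank ℝ E3 :=
      Submodule.finrank_le _
    have h3 : Module.finrank ℝ E3 = 3 := by
      simp [finrank_euclideanSpace]
    rw [h3] at h2
    simp only [Fintype.card_fin] at h1
    omega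
  rw [affineIndependent_iff_of_fintype] at hnot
  push_neg at hnot
  obtain ⟨w, hw, hvsub, i0, hi0⟩ := hnot
  have hP : ∑ j, w j • p j = 0 := by
    rwa [Finset.univ.weightedVSub_eq_linear_combination hw] at hvsub
  set S : ℝ := ∑ j, w j * ⟪p j, p j⟫ with hS
  have base : ∀ x : E3, ∑ j, w j * (⟪x,x⟫ - 2*⟪x, p j⟫ + ⟪p j, p j⟫) = S := by
    intro x
    have hx : ∑ j, w j * ⟪x, p j⟫ = 0 := by
      have h0 : ⟪x, ∑ j, w j • p j⟫ = (0:ℝ) := by rw [hP]; exact inner_zero_right x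
      simp only [inner_sum, real_inner_smul_right] at h0
      exact h0
    have expand : ∀ j : Fin 5, w j * (⟪x,x⟫ - 2*⟪x,p j⟫ + ⟪p j,p j⟫)
        = ⟪x,x⟫ * w j - 2*(w j * ⟪x,p j⟫) + w j * ⟪p j,p j⟫ := fun j => by ring
    rw [Finset.sum_congr rfl (fun j _ => expand j), Finset.sum_add_distrib,
      Finset.sum_sub_distrib, ← Finset.mul_sum, ← Finset.mul_sum, hw, hx]
    simp [hS]
  have hdsq : ∀ x y : E3, dist x y ^ 2 = ⟪x,x⟫ - 2*⟪x,y⟫ + ⟪y,y⟫ := by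
    intro x y
    rw [aux_dist_sq, real_inner_sub_sub_self]
  -- the null vector
  set c : Fin 6 → ℝ := ![-S, w 0, w 1, w 2, w 3, w 4] with hc
  have hcne : c ≠ 0 := by
    intro h
    have hz : ∀ j : Fin 5, w j = 0 := by
      intro j
      fin_cases j
      · exact congrFun h 1
      · exact congrFun h 2
      · exact congrFun h 3
      · exact congrFun h 4
      · exact congrFun h 5
    exact hi0 (hz i0)
  have hrow : ∀ k : Fin 5, ∑ j, w j * dist (p k) (p j) ^ 2 = S := by
    intro k
    have := base (p k)
    rw [← this]
    exact Finset.sum_congr rfl fun j _ => by rw [hdsq]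
  have hmul : (!![0, 1, 1, 1, 1, 1;
                1, 0, dist (p 0) (p 1) ^ 2, dist (p 0) (p 2) ^ 2, dist (p 0) (p 3) ^ 2, dist (p 0) (p 4) ^ 2;
                1, dist (p 0) (p 1) ^ 2, 0, dist (p 1) (p 2) ^ 2, dist (p 1) (p 3) ^ 2, dist (p 1) (p 4) ^ 2;
                1, dist (p 0) (p 2) ^ 2, dist (p 1) (p 2) ^ 2, 0, dist (p 2) (p 3) ^ 2, dist (p 2) (p 4) ^ 2;
                1, dist (p 0) (p 3) ^ 2, dist (p 1) (p 3) ^ 2, dist (p 2) (p 3) ^ 2, 0, dist (p 3) (p 4) ^ 2;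
                1, dist (p 0) (p 4) ^ 2, dist (p 1) (p 4) ^ 2, dist (p 2) (p 4) ^ 2, dist (p 3) (p 4) ^ 2, 0]).mulVec c = 0 := by
    funext k
    fin_cases k <;>
      simp [Matrix.mulVec, dotProduct, Fin.sum_univ_six, hc, aux_cons_val_five]
    · -- row 0 : sum of weights
      have h5 := hw
      rw [Fin.sum_univ_five] at h5
      linarith
    · -- rows 1..5
      have h5 := hrow 0
      rw [Fin.sum_univ_five] at h5
      simp only [dist_self] at h5
      norm_num at h5
      linarith
    · have h5 := hrow 1
      rw [Fin.sum_univ_five] at h5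
      simp only [dist_self] at h5
      norm_num at h5
      simp only [dist_comm (p 1) (p 0)] at h5
      linarith
    · have h5 := hrow 2
      rw [Fin.sum_univ_five] at h5
      simp only [dist_self] at h5
      norm_num at h5
      simp only [dist_comm (p 2) (p 0), dist_comm (p 2) (p 1)] at h5
      linarith
    · have h5 := hrow 3
      rw [Fin.sum_univ_five] at h5
      simp only [dist_self] at h5
      norm_num at h5
      simp only [dist_comm (p 3) (p 0), dist_comm (p 3) (p 1), dist_comm (p 3) (p 2)] at h5
      linarith
    · have h5 := hrow 4
      rw [Fin.sum_univ_five] at h5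
      simp only [dist_self] at h5
      norm_num at h5
      simp only [dist_comm (p 4) (p 0), dist_comm (p 4) (p 1), dist_comm (p 4) (p 2), dist_comm (p 4) (p 3)] at h5
      linarith
  rw [cmP]
  exact Matrix.exists_mulVec_eq_zero_iff.mp ⟨c, hcne, hmul⟩

/-- Theorem 8 of the paper: an invertible affine map `A : ℝ³ → ℝ³`
with linear part `L` produces a single positive constant `α* = (det L)²` which
simultaneously (i) scales the Cayley–Menger determinant of every affinely
independent quadruple, (ii) gives an all-positive solution of the five-equation
system `⁴q'_j = α·⁴q_j` for every quintuple with `y₁ ≠ y₃`, `y₂ ≠ y₄`, and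
(iii) gives an all-positive solution of the seven-equation system
`⁵q'_j = α·⁵q_j`, `⁵q = 0`, `⁵q' = 0` for every quintuple with `y₁ ≠ y₃`,
`y₂ ≠ y₄`, `y₁ ≠ y₄`. -/

theorem uniform_alpha_for_affine_equivalence
    (A : EuclideanSpace ℝ (Fin 3) →ᵃ[ℝ] EuclideanSpace ℝ (Fin 3))
    (hA : Function.Bijective A) :
    ∃ αs : ℝ, αs = (LinearMap.det A.linear) ^ 2 ∧ 0 < αs ∧
      (∀ y : Fin 4 → EuclideanSpace ℝ (Fin 3), AffineIndependent ℝ y →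
        cm4 (fun i => A (y i)) = αs * cm4 y) ∧
      (∀ y : Fin 5 → EuclideanSpace ℝ (Fin 3), y 1 ≠ y 3 → y 2 ≠ y 4 →
        ∃ t s t' s' : ℝ, 0 < t ∧ 0 < s ∧ 0 < t' ∧ 0 < s' ∧
          q40 (fun i => A (y i)) t' s' = αs * q40 y t s ∧
          q41 (fun i => A (y i)) s' = αs * q41 y s ∧
          q42 (fun i => A (y i)) t' = αs * q42 y t ∧
          q43 (fun i => A (y i)) s' = αs * q43 y s ∧
          q44 (fun i => A (y i)) t' = αs * q44 y t) ∧
      (∀ y : Fin 5 → EuclideanSpace ℝ (Fin 3), y 1 ≠ y 3 → y 2 ≠ y 4 → y 1 ≠ y 4 →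
        ∃ t s r t' s' r' : ℝ, 0 < t ∧ 0 < s ∧ 0 < r ∧ 0 < t' ∧ 0 < s' ∧ 0 < r' ∧
          q50 (fun i => A (y i)) t' s' r' = αs * q50 y t s r ∧
          q51 (fun i => A (y i)) s' = αs * q51 y s ∧
          q52 (fun i => A (y i)) t' r' = αs * q52 y t r ∧
          q53 (fun i => A (y i)) s' r' = αs * q53 y s r ∧
          q54 (fun i => A (y i)) t' = αs * q54 y t ∧
          q5full y t s r = 0 ∧
          q5full (fun i => A (y i)) t' s' r' = 0) := by
  have hLbij : Function.Bijective A.linear := A.linear_bijective_iff.mpr hA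
  have hdet : LinearMap.det A.linear ≠ 0 := by
    have h := (LinearEquiv.ofBijective A.linear hLbij).isUnit_det'
    have he : ((LinearEquiv.ofBijective A.linear hLbij : E3 ≃ₗ[ℝ] E3) : E3 →ₗ[ℝ] E3)
        = A.linear := rfl
    rw [he] at h
    exact h.ne_zero
  have hpos : (0:ℝ) < (LinearMap.det A.linear) ^ 2 :=
    lt_of_le_of_ne (sq_nonneg _) (Ne.symm (pow_ne_zero 2 hdet))
  have hinj := hA.injective
  refine ⟨(LinearMap.det A.linear) ^ 2, rfl, hpos, ?_, ?_, ?_⟩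
  · intro y _
    exact aux_cmQ_affine A (y 0) (y 1) (y 2) (y 3)
  · intro y h13 h24
    refine ⟨dist (y 1) (y 3), dist (y 2) (y 4),
      dist (A (y 1)) (A (y 3)), dist (A (y 2)) (A (y 4)),
      dist_pos.mpr h13, dist_pos.mpr h24,
      dist_pos.mpr (fun h => h13 (hinj h)), dist_pos.mpr (fun h => h24 (hinj h)),
      ?_, ?_, ?_, ?_, ?_⟩
    · exact aux_cmQ_affine A (y 1) (y 2) (y 3) (y 4)
    · exact aux_cmQ_affine A (y 0) (y 2) (y 3) (y 4)
    · exact aux_cmQ_affine A (y 0) (y 1) (y 3) (y 4)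
    · exact aux_cmQ_affine A (y 0) (y 1) (y 2) (y 4)
    · exact aux_cmQ_affine A (y 0) (y 1) (y 2) (y 3)
  · intro y h13 h24 h14
    refine ⟨dist (y 1) (y 3), dist (y 2) (y 4), dist (y 1) (y 4),
      dist (A (y 1)) (A (y 3)), dist (A (y 2)) (A (y 4)), dist (A (y 1)) (A (y 4)),
      dist_pos.mpr h13, dist_pos.mpr h24, dist_pos.mpr h14,
      dist_pos.mpr (fun h => h13 (hinj h)), dist_pos.mpr (fun h => h24 (hinj h)),
      dist_pos.mpr (fun h => h14 (hinj h)),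
      ?_, ?_, ?_, ?_, ?_, ?_, ?_⟩
    · exact aux_cmQ_affine A (y 1) (y 2) (y 3) (y 4)
    · exact aux_cmQ_affine A (y 0) (y 2) (y 3) (y 4)
    · exact aux_cmQ_affine A (y 0) (y 1) (y 3) (y 4)
    · exact aux_cmQ_affine A (y 0) (y 1) (y 2) (y 4)
    · exact aux_cmQ_affine A (y 0) (y 1) (y 2) (y 3)
    · exact aux_cmP_dist_zero y
    · exact aux_cmP_dist_zero (fun i => A (y i))
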